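/- Let A_1, …, A_L be elements of a complex Banach algebra (e.g. complex n×n matrices with the operator norm). Define S(t) = ∏_{k=1}^{L} exp(t A_k) (product in increasing order of k) and S_rev(t) = ∏_{k=L}^{1} exp(t A_k) (product in decreasing order of k). Then the function t ↦ (1/2)(S(t) + S_rev(t)) − exp(t ∑_{k=1}^{L} A_k) is O(t³) as t → 0; that is, there exist C > 0 and δ > 0 such that ‖(1/2)(S(t) + S_rev(t)) − exp(t ∑_k A_k)‖ ≤ C|t|³ for all |t| ≤ δ. -/

import Mathlib

open NormedSpace Asymptotics Filter Topology

section Aux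

variable {𝔸 : Type*} [NormedRing 𝔸] [NormedAlgebra ℂ 𝔸] [CompleteSpace 𝔸]

/-- Quadratic Taylor polynomial with given coefficients. -/
noncomputable def myT (x0 x1 x2 : 𝔸) (c : ℂ) : 𝔸 := x0 + c • x1 + c ^ 2 • x2

lemma cubeO_monomial {n : ℕ} (hn : 3 ≤ n) (x : 𝔸) :
    (fun c : ℂ => c ^ n • x) =O[𝓝 (0 : ℂ)] fun c => ‖c‖ ^ 3 := by
  rw [isBigO_iff]
  refine ⟨‖x‖, ?_⟩
  have h1 : ∀ᶠ c : ℂ in 𝓝 0, ‖c‖ ≤ 1 := by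
    have := Metric.closedBall_mem_nhds (0 : ℂ) one_pos
    filter_upwards [this] with c hc
    simpa [Metric.mem_closedBall] using hc
  filter_upwards [h1] with c hc
  have hcn : ‖c‖ ^ n ≤ ‖c‖ ^ 3 := pow_le_pow_of_le_one (norm_nonneg c) hc hn
  calc ‖c ^ n • x‖ ≤ ‖c ^ n‖ * ‖x‖ := _root_.norm_smul_le _ _
    _ = ‖c‖ ^ n * ‖x‖ := by rw [norm_pow]
    _ ≤ ‖c‖ ^ 3 * ‖x‖ := by
        exact mul_le_mul_of_nonneg_right hcn (norm_nonneg _)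
    _ = ‖x‖ * ‖‖c‖ ^ 3‖ := by
        rw [Real.norm_eq_abs, abs_of_nonneg (by positivity)]; ring

/-- `myT` is `O(1)` near `0`. -/
lemma myT_isBigO_one (x0 x1 x2 : 𝔸) :
    (fun c : ℂ => myT x0 x1 x2 c) =O[𝓝 (0 : ℂ)] (fun _ => (1 : ℝ)) := by
  have h : ContinuousAt (fun c : ℂ => myT x0 x1 x2 c) 0 := by
    unfold myT; fun_prop
  have := h.tendsto
  exact this.isBigO_one ℝ

set_option maxHeartbeats 1000000 in
/-- Taylor expansion of `exp (c • a)` to second order, with cubic remainder. -/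
lemma exp_taylor (a : 𝔸) :
    (fun c : ℂ => exp (c • a) - myT 1 a ((2 : ℂ)⁻¹ • (a * a)) c)
      =O[𝓝 (0 : ℂ)] fun c => ‖c‖ ^ 3 := by
  rw [isBigO_iff]
  set K : ℝ := ∑' n : ℕ, ‖a‖ ^ (n + 3) / ((n + 3).factorial : ℝ) with hKdef
  have hgsum : Summable (fun n : ℕ => ‖a‖ ^ (n + 3) / ((n + 3).factorial : ℝ)) :=
    (summable_nat_add_iff 3).2 (Real.summable_pow_div_factorial ‖a‖)
  refine ⟨K, ?_⟩
  have h1 : ∀ᶠ c : ℂ in 𝓝 0, ‖c‖ ≤ 1 := by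
    filter_upwards [Metric.closedBall_mem_nhds (0 : ℂ) one_pos] with c hc
    simpa [Metric.mem_closedBall] using hc
  filter_upwards [h1] with c hc
  have hsum : Summable fun n : ℕ => ((n.factorial : ℂ)⁻¹ • (c • a) ^ n) :=
    expSeries_summable' (𝕂 := ℂ) (c • a)
  have hnsum : Summable fun n : ℕ => ‖((n.factorial : ℂ)⁻¹ • (c • a) ^ n)‖ :=
    norm_expSeries_summable' (𝕂 := ℂ) (c • a)
  have hexp : exp (c • a) = ∑' n : ℕ, ((n.factorial : ℂ)⁻¹ • (c • a) ^ n) := by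
    rw [exp_eq_tsum (𝕂 := ℂ)]
  have hsplit :
      (∑ i ∈ Finset.range 3, ((i.factorial : ℂ)⁻¹ • (c • a) ^ i)) +
        ∑' n : ℕ, (((n + 3).factorial : ℂ)⁻¹ • (c • a) ^ (n + 3)) =
        ∑' n : ℕ, ((n.factorial : ℂ)⁻¹ • (c • a) ^ n) :=
    Summable.sum_add_tsum_nat_add 3 hsum
  have hpart : (∑ i ∈ Finset.range 3, ((i.factorial : ℂ)⁻¹ • (c • a) ^ i)) =
      myT 1 a ((2 : ℂ)⁻¹ • (a * a)) c := by
    rw [show (3 : ℕ) = 2 + 1 from rfl, Finset.sum_range_succ, Finset.sum_range_succ,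
      Finset.sum_range_one]
    have h2 : ((2 : ℕ).factorial : ℂ) = 2 := by norm_num [Nat.factorial]
    simp only [Nat.factorial_zero, Nat.factorial_one, Nat.cast_one, inv_one, one_smul,
      pow_zero, pow_one, h2]
    rw [smul_pow, myT, smul_comm, sq a]
  have heq : exp (c • a) - myT 1 a ((2 : ℂ)⁻¹ • (a * a)) c =
      ∑' n : ℕ, (((n + 3).factorial : ℂ)⁻¹ • (c • a) ^ (n + 3)) := by
    rw [hexp, ← hsplit, hpart]; abel
  rw [heq]
  have hbound : ∀ n : ℕ, ‖(((n + 3).factorial : ℂ)⁻¹ • (c • a) ^ (n + 3))‖ ≤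
      ‖c‖ ^ 3 * (‖a‖ ^ (n + 3) / ((n + 3).factorial : ℝ)) := by
    intro n
    rw [smul_pow]
    have e1 : ‖(((n + 3).factorial : ℂ))⁻¹‖ = (((n + 3).factorial : ℝ))⁻¹ := by
      rw [norm_inv]
      norm_num
    calc ‖((n + 3).factorial : ℂ)⁻¹ • c ^ (n + 3) • a ^ (n + 3)‖
        ≤ ‖((n + 3).factorial : ℂ)⁻¹‖ * ‖c ^ (n + 3) • a ^ (n + 3)‖ :=
          _root_.norm_smul_le _ _
      _ ≤ ‖((n + 3).factorial : ℂ)⁻¹‖ * (‖c ^ (n + 3)‖ * ‖a ^ (n + 3)‖) := by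
          gcongr
          exact _root_.norm_smul_le _ _
      _ ≤ (((n + 3).factorial : ℝ))⁻¹ * (‖c‖ ^ 3 * ‖a‖ ^ (n + 3)) := by
          rw [e1, norm_pow]
          refine mul_le_mul_of_nonneg_left ?_ (by positivity)
          exact mul_le_mul
            (pow_le_pow_of_le_one (norm_nonneg c) hc (Nat.le_add_left 3 n))
            (norm_pow_le' a (by norm_num)) (norm_nonneg _) (by positivity)
      _ = ‖c‖ ^ 3 * (‖a‖ ^ (n + 3) / ((n + 3).factorial : ℝ)) := by
          rw [div_eq_mul_inv]
          ring
  have hnsum3 : Summable fun n : ℕ => ‖(((n + 3).factorial : ℂ)⁻¹ • (c • a) ^ (n + 3))‖ :=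
    (summable_nat_add_iff 3).2 hnsum
  calc ‖∑' n : ℕ, (((n + 3).factorial : ℂ)⁻¹ • (c • a) ^ (n + 3))‖
      ≤ ∑' n : ℕ, ‖(((n + 3).factorial : ℂ)⁻¹ • (c • a) ^ (n + 3))‖ :=
        norm_tsum_le_tsum_norm hnsum3
    _ ≤ ∑' n : ℕ, ‖c‖ ^ 3 * (‖a‖ ^ (n + 3) / ((n + 3).factorial : ℝ)) :=
        Summable.tsum_le_tsum hbound hnsum3 (hgsum.mul_left _)
    _ = ‖c‖ ^ 3 * K := tsum_mul_left
    _ ≤ K * ‖‖c‖ ^ 3‖ := by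
        rw [Real.norm_eq_abs, abs_of_nonneg (by positivity)]
        exact le_of_eq (mul_comm _ _)

/-- Product of quadratic polynomials agrees with the expected quadratic
polynomial up to cubic terms. -/
lemma myT_mul (x0 x1 x2 y0 y1 y2 : 𝔸) :
    (fun c : ℂ => myT x0 x1 x2 c * myT y0 y1 y2 c -
        myT (x0 * y0) (x0 * y1 + x1 * y0) (x0 * y2 + x1 * y1 + x2 * y0) c)
      =O[𝓝 (0 : ℂ)] fun c => ‖c‖ ^ 3 := by
  have key : ∀ c : ℂ, myT x0 x1 x2 c * myT y0 y1 y2 c -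
      myT (x0 * y0) (x0 * y1 + x1 * y0) (x0 * y2 + x1 * y1 + x2 * y0) c =
      c ^ 3 • (x1 * y2 + x2 * y1) + c ^ 4 • (x2 * y2) := by
    intro c
    simp only [myT, mul_add, add_mul, smul_mul_assoc, mul_smul_comm, smul_smul,
      smul_add]
    rw [show c * c ^ 2 = c ^ 3 by ring, show c ^ 2 * c = c ^ 3 by ring,
      show c ^ 2 * c ^ 2 = c ^ 4 by ring, show c * c = c ^ 2 by ring]
    abel
  calc (fun c : ℂ => myT x0 x1 x2 c * myT y0 y1 y2 c -
      myT (x0 * y0) (x0 * y1 + x1 * y0) (x0 * y2 + x1 * y1 + x2 * y0) c)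
      = fun c : ℂ => c ^ 3 • (x1 * y2 + x2 * y1) + c ^ 4 • (x2 * y2) := funext key
    _ =O[𝓝 (0 : ℂ)] fun c => ‖c‖ ^ 3 :=
        (cubeO_monomial le_rfl _).add (cubeO_monomial (by norm_num) _)

/-- Second order coefficient of an ordered product of exponentials. -/
noncomputable def qL : List 𝔸 → 𝔸
  | [] => 0
  | a :: l => (2 : ℂ)⁻¹ • (a * a) + a * l.sum + qL l

lemma prod_taylor (l : List 𝔸) :
    (fun c : ℂ => ((l.map fun a => exp (c • a)).prod) - myT 1 l.sum (qL l) c)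
      =O[𝓝 (0 : ℂ)] fun c => ‖c‖ ^ 3 := by
  induction l with
  | nil =>
      have h : (fun c : ℂ =>
          ((List.map (fun a => exp (c • a)) ([] : List 𝔸)).prod) -
            myT 1 ([] : List 𝔸).sum (qL []) c) = fun _ => (0 : 𝔸) := by
        funext c
        simp [qL, myT]
      rw [h]
      exact isBigO_zero _ _
  | cons a l ih =>
      have hcube1 : (fun c : ℂ => ‖c‖ ^ 3) =O[𝓝 (0 : ℂ)] (fun _ => (1 : ℝ)) := by
        have h : Tendsto (fun c : ℂ => ‖c‖ ^ 3) (𝓝 0) (𝓝 (‖(0 : ℂ)‖ ^ 3)) := by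
          exact ((continuous_norm.pow 3).tendsto 0)
        exact h.isBigO_one ℝ
      have hP1 : (fun c : ℂ => ((l.map fun a => exp (c • a)).prod))
          =O[𝓝 (0 : ℂ)] (fun _ => (1 : ℝ)) := by
        have := (ih.trans hcube1).add (myT_isBigO_one 1 l.sum (qL l))
        simpa using this
      have h1 : (fun c : ℂ => (exp (c • a) - myT 1 a ((2 : ℂ)⁻¹ • (a * a)) c) *
          ((l.map fun a => exp (c • a)).prod)) =O[𝓝 (0 : ℂ)] fun c => ‖c‖ ^ 3 := by
        have := (exp_taylor a).mul hP1
        simpa using this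
      have h2 : (fun c : ℂ => myT 1 a ((2 : ℂ)⁻¹ • (a * a)) c *
          (((l.map fun a => exp (c • a)).prod) - myT 1 l.sum (qL l) c))
          =O[𝓝 (0 : ℂ)] fun c => ‖c‖ ^ 3 := by
        have := (myT_isBigO_one 1 a ((2 : ℂ)⁻¹ • (a * a))).mul ih
        simpa using this
      have h3 := myT_mul 1 a ((2 : ℂ)⁻¹ • (a * a)) 1 l.sum (qL l)
      have key : ∀ c : ℂ,
          (((a :: l).map fun x => exp (c • x)).prod) - myT 1 (a :: l).sum (qL (a :: l)) c =
          (exp (c • a) - myT 1 a ((2 : ℂ)⁻¹ • (a * a)) c) *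
              ((l.map fun x => exp (c • x)).prod) +
            myT 1 a ((2 : ℂ)⁻¹ • (a * a)) c *
              (((l.map fun x => exp (c • x)).prod) - myT 1 l.sum (qL l) c) +
            (myT 1 a ((2 : ℂ)⁻¹ • (a * a)) c * myT 1 l.sum (qL l) c -
              myT (1 * 1) (1 * l.sum + a * 1)
                (1 * qL l + a * l.sum + ((2 : ℂ)⁻¹ • (a * a)) * 1) c) := by
        intro c
        have hT : myT (1 * 1) (1 * l.sum + a * 1)
            (1 * qL l + a * l.sum + ((2 : ℂ)⁻¹ • (a * a)) * 1) c =
            myT 1 (a :: l).sum (qL (a :: l)) c := by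
          simp only [myT, one_mul, mul_one, List.sum_cons, qL]
          module
        rw [hT, List.map_cons, List.prod_cons]
        noncomm_ring
      have hfun : (fun c : ℂ =>
          (((a :: l).map fun x => exp (c • x)).prod) - myT 1 (a :: l).sum (qL (a :: l)) c) =
          fun c : ℂ =>
          (exp (c • a) - myT 1 a ((2 : ℂ)⁻¹ • (a * a)) c) *
              ((l.map fun x => exp (c • x)).prod) +
            myT 1 a ((2 : ℂ)⁻¹ • (a * a)) c *
              (((l.map fun x => exp (c • x)).prod) - myT 1 l.sum (qL l) c) +
            (myT 1 a ((2 : ℂ)⁻¹ • (a * a)) c * myT 1 l.sum (qL l) c -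
              myT (1 * 1) (1 * l.sum + a * 1)
                (1 * qL l + a * l.sum + ((2 : ℂ)⁻¹ • (a * a)) * 1) c) := funext key
      rw [hfun]
      exact (h1.add h2).add h3

lemma qL_append_singleton (l : List 𝔸) (a : 𝔸) :
    qL (l ++ [a]) = qL l + l.sum * a + (2 : ℂ)⁻¹ • (a * a) := by
  induction l with
  | nil => simp [qL]
  | cons b l ih =>
      simp only [List.cons_append, qL, ih, List.append_eq, List.sum_append,
        List.sum_cons, List.sum_nil, add_zero, mul_add, add_mul]
      abel

lemma qL_add_qL_reverse (l : List 𝔸) :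
    qL l + qL l.reverse = l.sum * l.sum := by
  induction l with
  | nil => simp [qL]
  | cons a l ih =>
      rw [List.reverse_cons, qL_append_singleton, List.sum_reverse]
      have h2 : (2 : ℂ)⁻¹ • (a * a) + (2 : ℂ)⁻¹ • (a * a) = a * a := by
        rw [← add_smul]; norm_num
      simp only [qL, List.sum_cons]
      calc (2 : ℂ)⁻¹ • (a * a) + a * l.sum + qL l +
            (qL l.reverse + l.sum * a + (2 : ℂ)⁻¹ • (a * a))
          = ((2 : ℂ)⁻¹ • (a * a) + (2 : ℂ)⁻¹ • (a * a)) + a * l.sum + l.sum * a +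
            (qL l + qL l.reverse) := by abel
        _ = (a + l.sum) * (a + l.sum) := by
            rw [h2, ih]; noncomm_ring

end Aux

/-- **Second-order cancellation for the random permutation protocol**: with
`S(t) = ∏_{k=1}^{L} exp(t Aₖ)` and `S_rev(t)` the reversed-order product,
`(1/2)(S(t) + S_rev(t)) - exp(t ∑ₖ Aₖ) = O(t³)` as `t → 0`. -/
theorem stmt11 {𝔸 : Type*} [NormedRing 𝔸] [NormedAlgebra ℂ 𝔸] [CompleteSpace 𝔸]
    {L : ℕ} (A : Fin L → 𝔸) :
    ∃ C > (0 : ℝ), ∃ δ > (0 : ℝ), ∀ t : ℝ, |t| ≤ δ →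
      ‖((1 / 2 : ℂ)) •
          ((((List.finRange L).map fun k => NormedSpace.exp ((t : ℂ) • A k)).prod) +
            ((((List.finRange L).map fun k => NormedSpace.exp ((t : ℂ) • A k)).reverse).prod)) -
        NormedSpace.exp ((t : ℂ) • ∑ k, A k)‖ ≤ C * |t| ^ 3 := by
  classical
  set l : List 𝔸 := (List.finRange L).map A with hl
  have hsumA : ∑ k, A k = l.sum := Fin.sum_univ_def A
  set F : ℂ → 𝔸 := fun c =>
    (1 / 2 : ℂ) • (((l.map fun a => exp (c • a)).prod) +
        ((l.reverse.map fun a => exp (c • a)).prod)) -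
      exp (c • l.sum) with hF
  -- `F` is `O(‖c‖³)`
  have h1 := prod_taylor l
  have h2 := prod_taylor l.reverse
  rw [List.sum_reverse] at h2
  have hexpS := exp_taylor l.sum
  have hq := qL_add_qL_reverse l
  have hhalf : ∀ c : ℂ, (1 / 2 : ℂ) •
      (myT 1 l.sum (qL l) c + myT 1 l.sum (qL l.reverse) c) =
      myT 1 l.sum ((2 : ℂ)⁻¹ • (l.sum * l.sum)) c := by
    intro c
    simp only [myT]
    rw [← hq]
    module
  have hFeq : F = fun c : ℂ =>
      (1 / 2 : ℂ) • (((l.map fun a => exp (c • a)).prod) - myT 1 l.sum (qL l) c) +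
        (1 / 2 : ℂ) • (((l.reverse.map fun a => exp (c • a)).prod) -
          myT 1 l.sum (qL l.reverse) c) -
        (exp (c • l.sum) - myT 1 l.sum ((2 : ℂ)⁻¹ • (l.sum * l.sum)) c) := by
    funext c
    rw [hF, ← hhalf c]
    module
  have hFO : F =O[𝓝 (0 : ℂ)] fun c => ‖c‖ ^ 3 := by
    rw [hFeq]
    exact ((h1.const_smul_left ((1 : ℂ) / 2)).add (h2.const_smul_left ((1 : ℂ) / 2))).sub hexpS
  -- compose with the real coercion
  have hco : Tendsto (fun t : ℝ => (t : ℂ)) (𝓝 0) (𝓝 (0 : ℂ)) := by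
    simpa using Complex.continuous_ofReal.tendsto 0
  have hG : (fun t : ℝ => F (t : ℂ)) =O[𝓝 (0 : ℝ)] fun t : ℝ => ‖((t : ℂ))‖ ^ 3 :=
    hFO.comp_tendsto hco
  rw [isBigO_iff] at hG
  obtain ⟨C, hC⟩ := hG
  rw [Metric.eventually_nhds_iff] at hC
  obtain ⟨ε, hε, hball⟩ := hC
  refine ⟨max C 1, lt_of_lt_of_le one_pos (le_max_right _ _), ε / 2, by positivity, ?_⟩
  intro t ht
  have hdist : dist t 0 < ε := by
    rw [Real.dist_eq, sub_zero]
    calc |t| ≤ ε / 2 := ht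
      _ < ε := by linarith
  have hb := hball hdist
  have hnorm : ‖((t : ℂ))‖ = |t| := by
    simp [Complex.norm_real]
  have hmatch : ((1 / 2 : ℂ)) •
      ((((List.finRange L).map fun k => NormedSpace.exp ((t : ℂ) • A k)).prod) +
        ((((List.finRange L).map fun k => NormedSpace.exp ((t : ℂ) • A k)).reverse).prod)) -
      NormedSpace.exp ((t : ℂ) • ∑ k, A k) = F ((t : ℂ)) := by
    rw [hF, hsumA, hl]
    simp only [List.map_map, ← List.map_reverse, Function.comp_def]
  rw [hmatch]
  calc ‖F ((t : ℂ))‖ ≤ C * ‖‖((t : ℂ))‖ ^ 3‖ := hb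
    _ = C * |t| ^ 3 := by
        rw [hnorm, Real.norm_eq_abs, abs_of_nonneg (by positivity)]
    _ ≤ max C 1 * |t| ^ 3 :=
        mul_le_mul_of_nonneg_right (le_max_left _ _) (by positivity)
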